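/- For every γ > 0 there exists N₀ such that for all integers N ≥ N₀ and all integers n with n ≥ 10γ N log N, the simple random walk on ℤ started at 0 satisfies P(τ_n < 9γ N² log N) ≤ N^{−5γ/4}. -/

import Mathlib

open MeasureTheory ProbabilityTheory ENNReal
open Finset

section aux
variable {Ω : Type} [MeasurableSpace Ω] {P : Measure Ω} [IsProbabilityMeasure P]
  {X : ℕ → Ω → ℤ}

lemma rw_ae_vals (hX : ∀ i, Measurable (X i))
    (hd : ∀ i, P {ω | X i ω = 1} = 1 / 2 ∧ P {ω | X i ω = -1} = 1 / 2) (i : ℕ) :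
    ∀ᵐ ω ∂P, X i ω = 1 ∨ X i ω = -1 := by
  have hA : MeasurableSet {ω | X i ω = 1} := (hX i) (measurableSet_singleton 1)
  have hB : MeasurableSet {ω | X i ω = -1} := (hX i) (measurableSet_singleton (-1))
  have hdisj : Disjoint {ω | X i ω = 1} {ω | X i ω = -1} := by
    rw [Set.disjoint_left]
    rintro ω (h1 : X i ω = 1) (h2 : X i ω = -1)
    omega
  have hU : P ({ω | X i ω = 1} ∪ {ω | X i ω = -1}) = 1 := by
    rw [measure_union hdisj hB, (hd i).1, (hd i).2, ENNReal.add_halves]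
  have h0 := (prob_compl_eq_zero_iff (hA.union hB)).2 hU
  rw [ae_iff]
  refine measure_mono_null (fun ω hω => ?_) h0
  simp only [Set.mem_setOf_eq, not_or] at hω
  simp only [Set.mem_compl_iff, Set.mem_union, Set.mem_setOf_eq, not_or]
  exact hω

lemma rw_mgf_step (hX : ∀ i, Measurable (X i))
    (hd : ∀ i, P {ω | X i ω = 1} = 1 / 2 ∧ P {ω | X i ω = -1} = 1 / 2) (i : ℕ) (t : ℝ) :
    mgf (fun ω => (X i ω : ℝ)) P t = Real.cosh t := by
  have hA : MeasurableSet {ω | X i ω = 1} := (hX i) (measurableSet_singleton 1)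
  have hB : MeasurableSet {ω | X i ω = -1} := (hX i) (measurableSet_singleton (-1))
  have hEq : (fun ω => Real.exp (t * (X i ω : ℝ))) =ᵐ[P]
      fun ω => ({ω | X i ω = 1}).indicator (fun _ => Real.exp t) ω
        + ({ω | X i ω = -1}).indicator (fun _ => Real.exp (-t)) ω := by
    filter_upwards [rw_ae_vals hX hd i] with ω hω
    rcases hω with h | h
    · have hmA : ω ∈ {ω | X i ω = 1} := h
      have hmB : ω ∉ {ω | X i ω = -1} := by simp only [Set.mem_setOf_eq, h]; omega
      simp [Set.indicator_of_mem hmA, Set.indicator_of_notMem hmB, h]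
    · have hmA : ω ∉ {ω | X i ω = 1} := by simp only [Set.mem_setOf_eq, h]; omega
      have hmB : ω ∈ {ω | X i ω = -1} := h
      simp [Set.indicator_of_mem hmB, Set.indicator_of_notMem hmA, h]
  rw [mgf, integral_congr_ae hEq, integral_add ((integrable_const _).indicator hA)
    ((integrable_const _).indicator hB), integral_indicator_const _ hA,
    integral_indicator_const _ hB, measureReal_def, measureReal_def, (hd i).1, (hd i).2, Real.cosh_eq]
  have h2 : ((1 / 2 : ℝ≥0∞)).toReal = (1 / 2 : ℝ) := by norm_num
  rw [h2]
  simp only [smul_eq_mul]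
  ring

end aux

set_option maxHeartbeats 1000000 in
/-- For every `γ > 0` there exists `N₀` such that for all integers `N ≥ N₀` and all integers
`n ≥ 10 γ N log N`, the simple random walk on `ℤ` started at `0` satisfies
`P(τ_n < 9 γ N² log N) ≤ N^{-5γ/4}`.  The event `τ_n < T` is expressed as the existence of a
time `t < T` at which the walk equals `n`. -/
theorem stmt4 (γ : ℝ) (hγ : 0 < γ) :
    ∃ N₀ : ℕ, ∀ N : ℕ, N₀ ≤ N →
    ∀ (Ω : Type) (_ : MeasurableSpace Ω) (P : Measure Ω), IsProbabilityMeasure P →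
    ∀ X : ℕ → Ω → ℤ,
      (∀ i, Measurable (X i)) →
      iIndepFun X P →
      (∀ i, P {ω | X i ω = 1} = 1 / 2 ∧ P {ω | X i ω = -1} = 1 / 2) →
    ∀ n : ℤ, 10 * γ * N * Real.log N ≤ (n : ℝ) →
      P {ω | ∃ t : ℕ, (t : ℝ) < 9 * γ * N ^ 2 * Real.log N ∧
          (∑ i ∈ Finset.range t, X i ω) = n}
        ≤ ENNReal.ofReal ((N : ℝ) ^ (-(5 * γ / 4))) := by
  refine ⟨max 3 (⌈γ⁻¹⌉₊ + 1), fun N hN Ω mΩ P hP X hX hindep hd n hn => ?_⟩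
  haveI := hP
  -- numeric setup
  have hN3 : (3 : ℕ) ≤ N := le_trans (le_max_left _ _) hN
  have hNR : (3 : ℝ) ≤ (N : ℝ) := by exact_mod_cast hN3
  have hNpos : (0 : ℝ) < N := by linarith
  set L : ℝ := Real.log N with hLdef
  have hL1 : 1 ≤ L := by
    have he : Real.exp 1 ≤ 3 := by
      have := Real.exp_one_lt_d9; linarith
    calc (1 : ℝ) = Real.log (Real.exp 1) := (Real.log_exp 1).symm
      _ ≤ L := Real.log_le_log (Real.exp_pos 1) (le_trans he hNR)
  have hγN : 1 ≤ γ * N := by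
    have h1 : (⌈γ⁻¹⌉₊ + 1 : ℕ) ≤ N := le_trans (le_max_right _ _) hN
    have h2 : γ⁻¹ < (N : ℝ) := by
      calc γ⁻¹ ≤ (⌈γ⁻¹⌉₊ : ℝ) := Nat.le_ceil _
        _ < N := by exact_mod_cast Nat.lt_of_lt_of_le (Nat.lt_succ_self _) h1
    have h3 := mul_lt_mul_of_pos_left h2 hγ
    rw [mul_inv_cancel₀ hγ.ne'] at h3
    linarith
  set n' : ℝ := (n : ℝ) with hn'def
  have hn10 : 10 * γ * N * L ≤ n' := hn
  have h10pos : (0 : ℝ) < 10 * γ * N * L := by nlinarith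
  have hn'pos : 0 < n' := lt_of_lt_of_le h10pos hn10
  set Tr : ℝ := 9 * γ * (N : ℝ) ^ 2 * L with hTrdef
  have hTrpos : 0 < Tr := by nlinarith
  set M : ℕ := ⌈Tr⌉₊ with hMdef
  set K : ℝ := (M : ℝ) + 1 with hKdef
  have hKpos : (0 : ℝ) < K := by positivity
  have hKle : K ≤ Tr + 2 := by
    have := Nat.ceil_lt_add_one hTrpos.le
    rw [hKdef, hMdef]; linarith
  set lam : ℝ := n' / K with hlamdef
  have hlampos : 0 < lam := div_pos hn'pos hKpos
  -- final real arithmetic, done early while the context is small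
  have harith : 5 * γ / 4 * L ≤ n' ^ 2 / (2 * K) := by
    rw [le_div_iff₀ (by positivity)]
    have hsq : (10 * γ * N * L) * (10 * γ * N * L) ≤ n' * n' :=
      mul_le_mul hn10 hn10 h10pos.le hn'pos.le
    have hγL : (0 : ℝ) ≤ γ * L := by positivity
    have hB : 3 ≤ γ * N * L * N := by nlinarith
    have hC : 3 * (γ * L) ≤ (γ * N * L * N) * (γ * L) := mul_le_mul_of_nonneg_right hB hγL
    have hD : 5 / 2 * γ * L * K ≤ 5 / 2 * γ * L * (Tr + 2) :=
      mul_le_mul_of_nonneg_left hKle (by positivity)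
    rw [hTrdef] at hD
    nlinarith [hsq, hC, hD]
  have hfinal : ∀ Mr : ℕ, (Mr : ℝ) + 1 = K →
      Real.cosh lam ^ (Mr + 1) / Real.exp (lam * n') ≤ (N : ℝ) ^ (-(5 * γ / 4)) := by
    intro Mr hMr
    have hcosh : Real.cosh lam ^ (Mr + 1) ≤ Real.exp (K * lam ^ 2 / 2) := by
      calc Real.cosh lam ^ (Mr + 1) ≤ Real.exp (lam ^ 2 / 2) ^ (Mr + 1) :=
            pow_le_pow_left₀ ((Real.cosh_pos (x := lam)).le) (Real.cosh_le_exp_half_sq lam) _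
        _ = Real.exp (((Mr : ℕ) + 1 : ℕ) * (lam ^ 2 / 2)) := (Real.exp_nat_mul _ _).symm
        _ = Real.exp (K * lam ^ 2 / 2) := by rw [← hMr]; push_cast; ring_nf
    have hexpid : K * lam ^ 2 / 2 - lam * n' = -(n' ^ 2 / (2 * K)) := by
      rw [hlamdef]
      field_simp
      ring
    calc Real.cosh lam ^ (Mr + 1) / Real.exp (lam * n')
        ≤ Real.exp (K * lam ^ 2 / 2) / Real.exp (lam * n') := by gcongr
      _ = Real.exp (K * lam ^ 2 / 2 - lam * n') := (Real.exp_sub _ _).symm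
      _ = Real.exp (-(n' ^ 2 / (2 * K))) := by rw [hexpid]
      _ ≤ Real.exp (L * -(5 * γ / 4)) := by
          apply Real.exp_le_exp.2
          nlinarith [harith]
      _ = (N : ℝ) ^ (-(5 * γ / 4)) := (Real.rpow_def_of_pos hNpos _).symm
  -- random variables
  set Y : ℕ → Ω → ℝ := fun i ω => (X i ω : ℝ) with hYdef
  have hYmeas : ∀ i, Measurable (Y i) := fun i => measurable_from_top.comp (hX i)
  have hYsm : ∀ i, StronglyMeasurable (Y i) := fun i => (hYmeas i).stronglyMeasurable
  have hindepY : iIndepFun Y P :=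
    hindep.comp (fun _ => (Int.cast : ℤ → ℝ)) (fun _ => measurable_from_top)
  set F : ℕ → Ω → ℝ := fun k ω => Real.exp (lam * ∑ i ∈ Finset.range (k + 1), Y i ω) with hFdef
  have hvals : ∀ᵐ ω ∂P, ∀ i, X i ω = 1 ∨ X i ω = -1 :=
    ae_all_iff.2 fun i => rw_ae_vals hX hd i
  -- integrability
  have hexpint : ∀ (c : ℝ) (j : ℕ), Integrable (fun ω => Real.exp (c * Y j ω)) P := by
    intro c j
    have hm : Measurable fun ω => Real.exp (c * Y j ω) := ((hYmeas j).const_mul c).exp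
    refine ⟨hm.aestronglyMeasurable, HasFiniteIntegral.of_bounded
      (C := Real.exp |c|) ?_⟩
    filter_upwards [hvals] with ω hω
    have h1 : |Y j ω| ≤ 1 := by rcases hω j with h | h <;> simp [hYdef, h]
    have h2 : c * Y j ω ≤ |c| := by
      calc c * Y j ω ≤ |c * Y j ω| := le_abs_self _
        _ = |c| * |Y j ω| := abs_mul _ _
        _ ≤ |c| * 1 := by gcongr
        _ = |c| := mul_one _
    rw [Real.norm_eq_abs, Real.abs_exp]
    exact Real.exp_le_exp.2 h2
  have hFint : ∀ k, Integrable (F k) P := by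
    intro k
    have hm : Measurable (F k) :=
      ((Finset.measurable_sum _ (fun i _ => hYmeas i)).const_mul lam).exp
    refine ⟨hm.aestronglyMeasurable, HasFiniteIntegral.of_bounded
      (C := Real.exp (|lam| * (k + 1))) ?_⟩
    filter_upwards [hvals] with ω hω
    have hsum : |∑ i ∈ Finset.range (k + 1), Y i ω| ≤ ((k : ℝ) + 1) := by
      calc |∑ i ∈ Finset.range (k + 1), Y i ω| ≤ ∑ i ∈ Finset.range (k + 1), |Y i ω| :=
            Finset.abs_sum_le_sum_abs _ _
        _ ≤ ∑ _i ∈ Finset.range (k + 1), (1 : ℝ) :=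
            Finset.sum_le_sum fun i _ => by rcases hω i with h | h <;> simp [hYdef, h]
        _ = (k : ℝ) + 1 := by simp
    have h2 : lam * ∑ i ∈ Finset.range (k + 1), Y i ω ≤ |lam| * ((k : ℝ) + 1) := by
      calc lam * ∑ i ∈ Finset.range (k + 1), Y i ω
          ≤ |lam * ∑ i ∈ Finset.range (k + 1), Y i ω| := le_abs_self _
        _ = |lam| * |∑ i ∈ Finset.range (k + 1), Y i ω| := abs_mul _ _
        _ ≤ |lam| * ((k : ℝ) + 1) := by gcongr
    rw [Real.norm_eq_abs, Real.abs_exp]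
    exact Real.exp_le_exp.2 (by exact_mod_cast h2)
  -- filtration and submartingale
  set ℱ := Filtration.natural Y hYsm with hFil
  have hadp : StronglyAdapted ℱ F := by
    intro k
    have hsm : StronglyMeasurable[ℱ k] fun ω => ∑ i ∈ Finset.range (k + 1), Y i ω := by
      refine Finset.stronglyMeasurable_fun_sum _ fun i hi => ?_
      have hik : i ≤ k := Nat.lt_succ_iff.mp (Finset.mem_range.mp hi)
      have hle : MeasurableSpace.comap (Y i) inferInstance ≤ ℱ k := by
        rw [hFil]
        exact le_biSup (fun j => MeasurableSpace.comap (Y j) inferInstance) hik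
      exact ((comap_measurable (Y i)).mono hle le_rfl).stronglyMeasurable
    exact Real.continuous_exp.comp_stronglyMeasurable (hsm.const_mul lam)
  have hstep : ∀ k, F k ≤ᵐ[P] P[F (k + 1)|ℱ k] := by
    intro k
    have hdecomp : F (k + 1) = F k * fun ω => Real.exp (lam * Y (k + 1) ω) := by
      funext ω
      simp only [hFdef, Pi.mul_apply]
      rw [Finset.sum_range_succ, mul_add, Real.exp_add]
    have hpull : P[F (k + 1)|ℱ k] =ᵐ[P] F k * P[fun ω => Real.exp (lam * Y (k + 1) ω)|ℱ k] := by
      rw [hdecomp]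
      exact condExp_mul_of_stronglyMeasurable_left (hadp k) (hdecomp ▸ hFint (k + 1)) (hexpint lam (k + 1))
    have hcond : P[fun ω => Real.exp (lam * Y (k + 1) ω)|ℱ k]
        =ᵐ[P] fun _ => ∫ ω, Real.exp (lam * Y (k + 1) ω) ∂P := by
      refine condExp_indep_eq ((hYmeas (k + 1)).comap_le) (ℱ.le k) ?_ ?_
      · exact (((measurable_id.const_mul lam).exp).comp
          (comap_measurable (Y (k + 1)))).stronglyMeasurable
      · rw [hFil]
        exact iIndepFun.indep_comap_natural_of_lt hYsm hindepY (Nat.lt_succ_self k)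
    have hint : ∫ ω, Real.exp (lam * Y (k + 1) ω) ∂P = Real.cosh lam :=
      rw_mgf_step hX hd (k + 1) lam
    filter_upwards [hpull, hcond] with ω h1 h2
    rw [h1, Pi.mul_apply, h2, hint]
    exact le_mul_of_one_le_right (Real.exp_pos _).le (Real.one_le_cosh lam)
  have hsub : Submartingale F ℱ P := submartingale_nat hadp hFint hstep
  have hnonneg : (0 : ℕ → Ω → ℝ) ≤ F := fun k ω => (Real.exp_pos _).le
  -- maximal inequality
  set ε : NNReal := (Real.exp (lam * n')).toNNReal with hεdef
  have hmax := maximal_ineq hsub hnonneg (ε := ε) M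
  set s : Set Ω := {ω | (ε : ℝ) ≤ (Finset.range (M + 1)).sup' nonempty_range_add_one
    fun k => F k ω} with hsdef
  have hεcoe : ((ε : ℝ)) = Real.exp (lam * n') := Real.coe_toNNReal _ (Real.exp_pos _).le
  have hsubset : {ω | ∃ t : ℕ, (t : ℝ) < Tr ∧ (∑ i ∈ Finset.range t, X i ω) = n} ⊆ s := by
    rintro ω ⟨t, ht, hts⟩
    have htpos : t ≠ 0 := by
      rintro rfl
      simp only [Finset.range_zero, Finset.sum_empty] at hts
      have : n' = 0 := by rw [hn'def, ← hts]; simp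
      linarith
    obtain ⟨k, rfl⟩ : ∃ k, t = k + 1 :=
      ⟨t - 1, (Nat.succ_pred_eq_of_pos (Nat.pos_of_ne_zero htpos)).symm⟩
    have hkmem : k ∈ Finset.range (M + 1) := by
      have h1 : ((k + 1 : ℕ) : ℝ) ≤ (M : ℝ) := le_trans ht.le (Nat.le_ceil Tr)
      have h2 : k + 1 ≤ M := by exact_mod_cast h1
      exact Finset.mem_range.2 (by omega)
    have hFval : F k ω = Real.exp (lam * n') := by
      simp only [hFdef]
      congr 1
      have hs : ∑ i ∈ Finset.range (k + 1), Y i ω = n' := by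
        simp only [hYdef, hn'def]
        exact_mod_cast congrArg (Int.cast : ℤ → ℝ) hts
      rw [hs]
    show (ε : ℝ) ≤ _
    rw [hεcoe, ← hFval]
    exact Finset.le_sup' (fun k => F k ω) hkmem
  -- integral bound
  have hIeq : ∫ ω, F M ω ∂P = Real.cosh lam ^ (M + 1) := by
    have h1 : ∫ ω, F M ω ∂P = mgf (∑ i ∈ Finset.range (M + 1), Y i) P lam := by
      rw [mgf]
      congr 1
      funext ω
      simp [hFdef, Finset.sum_apply]
    rw [h1, iIndepFun.mgf_sum hindepY hYmeas (Finset.range (M + 1))]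
    rw [Finset.prod_congr rfl fun i _ => rw_mgf_step hX hd i lam]
    rw [Finset.prod_const, Finset.card_range]
  have hεne : (ε : ℝ≥0∞) ≠ 0 := by
    simp only [ne_eq, ENNReal.coe_eq_zero, hεdef, Real.toNNReal_eq_zero, not_le]
    exact Real.exp_pos _
  have key : (ε : ℝ≥0∞) * P s ≤ ENNReal.ofReal (Real.cosh lam ^ (M + 1)) := by
    calc (ε : ℝ≥0∞) * P s = ε • P s := rfl
      _ ≤ ENNReal.ofReal (∫ ω in s, F M ω ∂P) := hmax
      _ ≤ ENNReal.ofReal (∫ ω, F M ω ∂P) := ENNReal.ofReal_le_ofReal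
          (setIntegral_le_integral (hFint M) (ae_of_all _ fun ω => (Real.exp_pos _).le))
      _ = _ := by rw [hIeq]
  have hPs : P s ≤ ENNReal.ofReal (Real.cosh lam ^ (M + 1)) / (ε : ℝ≥0∞) :=
    (ENNReal.le_div_iff_mul_le (Or.inl hεne) (Or.inl ENNReal.coe_ne_top)).2
      (by rw [mul_comm]; exact key)
  have hcoeofReal : (ε : ℝ≥0∞) = ENNReal.ofReal (Real.exp (lam * n')) := rfl
  rw [hcoeofReal, ← ENNReal.ofReal_div_of_pos (Real.exp_pos _)] at hPs
  exact le_trans (measure_mono hsubset)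
    (le_trans hPs (ENNReal.ofReal_le_ofReal (hfinal M rfl)))
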